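/- Exchanging a spoke e with its rim edge φ₋(e) in a coloring of a wheel graph does not reverse the orientation of the coloring; consequently, if colorings P₁ and P₂ of a wheel have different orientations, any sequence of feasible symmetric exchanges transforming P₁ into P₂ must pass through a coloring with exactly two intervals. -/

import Mathlib

open Set symmDiff

/-- The wheel graph whose outer cycle has vertex set `ZMod m` (`m ≥ 3`): the center `none`
is joined to every outer vertex, and outer vertices `some i`, `some (i+1)` are adjacent. -/
def wheelGraph (m : ℕ) : SimpleGraph (Option (ZMod m)) where
  Adj u v := u ≠ v ∧ (u = none ∨ v = none ∨
    ∃ i : ZMod m, (u = some i ∧ v = some (i + 1)) ∨ (v = some i ∧ u = some (i + 1)))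
  symm := by
    refine ⟨?_⟩
    rintro u v ⟨hne, h⟩
    refine ⟨hne.symm, ?_⟩
    rcases h with h | h | ⟨i, h | h⟩
    · exact Or.inr (Or.inl h)
    · exact Or.inl h
    · exact Or.inr (Or.inr ⟨i, Or.inr h⟩)
    · exact Or.inr (Or.inr ⟨i, Or.inl h⟩)
  loopless := ⟨fun u h => h.1 rfl⟩

/-- The spoke joining the center to the outer vertex `i`. -/
def spokeE (m : ℕ) (i : ZMod m) : Sym2 (Option (ZMod m)) := s(none, some i)

/-- The rim edge joining the outer vertices `i` and `i + 1`. -/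
def rimE (m : ℕ) (i : ZMod m) : Sym2 (Option (ZMod m)) := s(some i, some (i + 1))

/-- `T` is the edge set of a spanning tree of the wheel: a set of wheel edges whose
associated graph is connected and acyclic. -/
def IsTreeSet (m : ℕ) (T : Set (Sym2 (Option (ZMod m)))) : Prop :=
  T ⊆ (wheelGraph m).edgeSet ∧ (SimpleGraph.fromEdgeSet T).Connected ∧
    (SimpleGraph.fromEdgeSet T).IsAcyclic

/-- A coloring of the wheel: a partition of its edge set into two spanning trees. -/
def IsWheelColoring (m : ℕ)
    (P : Set (Sym2 (Option (ZMod m))) × Set (Sym2 (Option (ZMod m)))) : Prop :=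
  IsTreeSet m P.1 ∧ IsTreeSet m P.2 ∧ Disjoint P.1 P.2 ∧
    P.1 ∪ P.2 = (wheelGraph m).edgeSet

/-- `WExchSeq m P L Q` : the list `L` of pairs `(e, f)` records a sequence of feasible
symmetric exchanges (each swapping a red edge `e` with a blue edge `f`, both color classes
remaining spanning trees) transforming the coloring `P` into `Q`. -/
def WExchSeq (m : ℕ) :
    Set (Sym2 (Option (ZMod m))) × Set (Sym2 (Option (ZMod m))) →
    List (Sym2 (Option (ZMod m)) × Sym2 (Option (ZMod m))) →
    Set (Sym2 (Option (ZMod m))) × Set (Sym2 (Option (ZMod m))) → Prop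
  | P, [], Q => P = Q
  | P, (e, f) :: L, Q =>
      ∃ P' : Set (Sym2 (Option (ZMod m))) × Set (Sym2 (Option (ZMod m))),
        e ∈ P.1 ∧ f ∈ P.2 ∧
        P'.1 = insert f (P.1 \ {e}) ∧ P'.2 = insert e (P.2 \ {f}) ∧
        IsWheelColoring m P' ∧ WExchSeq m P' L Q

/-- A coloring has positive orientation if every boundary rim edge (a rim edge whose two
neighbouring spokes have different colors) has the color of the spoke preceding it in the
counterclockwise (positive) direction. -/
def PositiveOrientation (m : ℕ)
    (P : Set (Sym2 (Option (ZMod m))) × Set (Sym2 (Option (ZMod m)))) : Prop :=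
  ∀ i : ZMod m, (spokeE m i ∈ P.1 ↔ spokeE m (i + 1) ∈ P.1) ∨
    (rimE m i ∈ P.1 ↔ spokeE m i ∈ P.1)

/-- A coloring has negative orientation if every boundary rim edge has the color of the
spoke following it in the positive direction. -/
def NegativeOrientation (m : ℕ)
    (P : Set (Sym2 (Option (ZMod m))) × Set (Sym2 (Option (ZMod m)))) : Prop :=
  ∀ i : ZMod m, (spokeE m i ∈ P.1 ↔ spokeE m (i + 1) ∈ P.1) ∨
    (rimE m i ∈ P.1 ↔ spokeE m (i + 1) ∈ P.1)

/-- Two colorings have the same orientation. -/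
def SameOrientation (m : ℕ)
    (P Q : Set (Sym2 (Option (ZMod m))) × Set (Sym2 (Option (ZMod m)))) : Prop :=
  (PositiveOrientation m P ∧ PositiveOrientation m Q) ∨
    (NegativeOrientation m P ∧ NegativeOrientation m Q)

/-- Two colorings have different orientations. -/
def DifferentOrientation (m : ℕ)
    (P Q : Set (Sym2 (Option (ZMod m))) × Set (Sym2 (Option (ZMod m)))) : Prop :=
  (PositiveOrientation m P ∧ NegativeOrientation m Q) ∨
    (NegativeOrientation m P ∧ PositiveOrientation m Q)

/-- The number of intervals (maximal runs of consecutive same-colored spokes) of a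
coloring: the number of boundaries, i.e. of indices `i` such that the spokes `i` and
`i + 1` have different colors. -/
noncomputable def intervalCount (m : ℕ)
    (P : Set (Sym2 (Option (ZMod m))) × Set (Sym2 (Option (ZMod m)))) : ℕ :=
  {i : ZMod m | ¬ (spokeE m i ∈ P.1 ↔ spokeE m (i + 1) ∈ P.1)}.ncard

/-- The total weight of a sequence of symmetric exchanges. -/
def wSeqWeight (m : ℕ) (w : Sym2 (Option (ZMod m)) → NNReal)
    (L : List (Sym2 (Option (ZMod m)) × Sym2 (Option (ZMod m)))) : NNReal :=
  (L.map fun p => w p.1 + w p.2).sum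

/-- The number of times an exchange sequence uses the edge `a`. -/
def wUsesCount (m : ℕ) (L : List (Sym2 (Option (ZMod m)) × Sym2 (Option (ZMod m))))
    (a : Sym2 (Option (ZMod m))) : ℕ :=
  (L.map Prod.fst).count a + (L.map Prod.snd).count a

/-- A single feasible symmetric exchange step between colorings of the wheel. -/
def WStep (m : ℕ)
    (P Q : Set (Sym2 (Option (ZMod m))) × Set (Sym2 (Option (ZMod m)))) : Prop :=
  ∃ e f, e ∈ P.1 ∧ f ∈ P.2 ∧ Q.1 = insert f (P.1 \ {e}) ∧ Q.2 = insert e (P.2 \ {f}) ∧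
    IsWheelColoring m Q
section Infra

variable {m : ℕ}

/-- Abbreviation for a pair of edge sets. -/
abbrev WPair (m : ℕ) := Set (Sym2 (Option (ZMod m))) × Set (Sym2 (Option (ZMod m)))

/-- `i` is a boundary of the coloring `P`. -/
def Bd (m : ℕ) (P : WPair m) (i : ZMod m) : Prop :=
  ¬ (spokeE m i ∈ P.1 ↔ spokeE m (i + 1) ∈ P.1)

lemma wOne_ne_zero (hm : 3 ≤ m) : (1 : ZMod m) ≠ 0 := by
  have : ((1 : ℕ) : ZMod m) ≠ 0 := by
    rw [Ne, ZMod.natCast_eq_zero_iff]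
    intro h; have := Nat.le_of_dvd one_pos h; omega
  simpa using this

lemma wTwo_ne_zero (hm : 3 ≤ m) : (2 : ZMod m) ≠ 0 := by
  have : ((2 : ℕ) : ZMod m) ≠ 0 := by
    rw [Ne, ZMod.natCast_eq_zero_iff]
    intro h; have := Nat.le_of_dvd two_pos h; omega
  simpa using this

lemma self_ne_add_one (hm : 3 ≤ m) (i : ZMod m) : i ≠ i + 1 := by
  intro h
  have : (1 : ZMod m) = 0 := by
    have := congrArg (· - i) h
    simpa [sub_eq_iff_eq_add] using this.symm
  exact wOne_ne_zero hm this

lemma spokeE_mem_edgeSet (i : ZMod m) : spokeE m i ∈ (wheelGraph m).edgeSet := by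
  rw [spokeE, SimpleGraph.mem_edgeSet]
  show _ ∧ _
  exact ⟨by simp, Or.inl rfl⟩

lemma rimE_mem_edgeSet (hm : 3 ≤ m) (i : ZMod m) : rimE m i ∈ (wheelGraph m).edgeSet := by
  rw [rimE, SimpleGraph.mem_edgeSet]
  show _ ∧ _
  refine ⟨by simpa using self_ne_add_one hm i, Or.inr (Or.inr ⟨i, Or.inl ⟨rfl, rfl⟩⟩)⟩

lemma spokeE_inj {i j : ZMod m} (h : spokeE m i = spokeE m j) : i = j := by
  rw [spokeE, spokeE, Sym2.eq_iff] at h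
  rcases h with ⟨-, h⟩ | ⟨h, -⟩
  · exact Option.some_injective _ h
  · exact absurd h (by simp)

lemma spokeE_ne_rimE (i j : ZMod m) : spokeE m i ≠ rimE m j := by
  rw [spokeE, rimE, Ne, Sym2.eq_iff]
  rintro (⟨h, -⟩ | ⟨h, -⟩) <;> simp at h

lemma rimE_inj (hm : 3 ≤ m) {i j : ZMod m} (h : rimE m i = rimE m j) : i = j := by
  rw [rimE, rimE, Sym2.eq_iff] at h
  rcases h with ⟨h, -⟩ | ⟨h1, h2⟩
  · exact Option.some_injective _ h
  · have h1' : i = j + 1 := Option.some_injective _ h1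
    have h2' : i + 1 = j := Option.some_injective _ h2
    exfalso
    apply wTwo_ne_zero hm
    have : i = i + 1 + 1 := by rw [h2']; exact h1'
    have := congrArg (· - i) this
    rw [eq_comm] at this
    linear_combination this

lemma edge_class {e : Sym2 (Option (ZMod m))} (he : e ∈ (wheelGraph m).edgeSet) :
    (∃ i, e = spokeE m i) ∨ (∃ i, e = rimE m i) := by
  induction e with
  | _ u v =>
    rw [SimpleGraph.mem_edgeSet] at he
    change _ ∧ _ at he
    obtain ⟨hne, h | h | ⟨i, ⟨h1, h2⟩ | ⟨h1, h2⟩⟩⟩ := he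
    · subst h
      match v, hne with
      | some j, _ => exact Or.inl ⟨j, rfl⟩
      | none, hne => exact absurd rfl hne
    · subst h
      match u, hne with
      | some j, _ => exact Or.inl ⟨j, by rw [spokeE, Sym2.eq_swap]⟩
      | none, hne => exact absurd rfl hne
    · subst h1; subst h2; exact Or.inr ⟨i, rfl⟩
    · subst h1; subst h2; exact Or.inr ⟨i, by rw [rimE, Sym2.eq_swap]⟩

end Infra
section Infra2

variable {m : ℕ}

lemma mem_union_edge {A B : Set (Sym2 (Option (ZMod m)))}
    (hunion : A ∪ B = (wheelGraph m).edgeSet) (hdisj : Disjoint A B)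
    {e : Sym2 (Option (ZMod m))} (he : e ∈ (wheelGraph m).edgeSet) :
    (e ∈ B ↔ e ∉ A) := by
  constructor
  · intro hB hA; exact Set.disjoint_left.mp hdisj hA hB
  · intro hA
    have : e ∈ A ∪ B := hunion ▸ he
    rcases this with h | h
    · exact absurd h hA
    · exact h

lemma coloring_mem2 {P : WPair m} (hP : IsWheelColoring m P)
    {e : Sym2 (Option (ZMod m))} (he : e ∈ (wheelGraph m).edgeSet) :
    (e ∈ P.2 ↔ e ∉ P.1) :=
  mem_union_edge hP.2.2.2 hP.2.2.1 he

/-- Every spanning tree of the wheel contains a spoke. -/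
lemma exists_spoke {A : Set (Sym2 (Option (ZMod m)))} (hA : IsTreeSet m A) :
    ∃ a, spokeE m a ∈ A := by
  obtain ⟨w⟩ := hA.2.1.preconnected none (some 0)
  cases w with
  | cons h p =>
    rename_i v
    rw [SimpleGraph.fromEdgeSet_adj] at h
    obtain ⟨hmem, hne⟩ := h
    match v, hne with
    | some a, _ => exact ⟨a, hmem⟩
    | none, hne => exact absurd rfl hne

/-- Walking `t` steps without crossing a boundary keeps the spoke color. -/
lemma spoke_const (P : WPair m) (i : ZMod m) :
    ∀ t : ℕ, (∀ s : ℕ, s < t → ¬ Bd m P (i + s)) →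
      (spokeE m i ∈ P.1 ↔ spokeE m (i + t) ∈ P.1)
  | 0, _ => by simp
  | (t+1), h => by
    have ih := spoke_const P i t (fun s hs => h s (by omega))
    have ht : ¬ Bd m P (i + t) := h t (by omega)
    rw [Bd, not_not] at ht
    have e : i + ((t+1 : ℕ) : ZMod m) = i + t + 1 := by push_cast; ring
    rw [e]
    exact ih.trans ht

lemma exists_bd_between (P : WPair m) (i : ZMod m) (t : ℕ)
    (h : ¬ (spokeE m i ∈ P.1 ↔ spokeE m (i + t) ∈ P.1)) :
    ∃ s : ℕ, s < t ∧ Bd m P (i + s) := by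
  by_contra hc
  push_neg at hc
  exact h (spoke_const P i t (fun s hs => hc s hs))

lemma exists_bd (hm : 3 ≤ m) {P : WPair m} (hP : IsWheelColoring m P) :
    ∃ i, Bd m P i := by
  haveI : NeZero m := ⟨by omega⟩
  obtain ⟨a, ha⟩ := exists_spoke hP.1
  obtain ⟨b, hb⟩ := exists_spoke hP.2.1
  have hb' : spokeE m b ∉ P.1 := (coloring_mem2 hP (spokeE_mem_edgeSet b)).mp hb
  have : ¬ (spokeE m a ∈ P.1 ↔ spokeE m (a + (b - a).val) ∈ P.1) := by
    rw [ZMod.natCast_zmod_val, add_sub_cancel]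
    simp [ha, hb']
  obtain ⟨s, -, hs⟩ := exists_bd_between P a _ this
  exact ⟨a + s, hs⟩

/-- The boundary set of `P` as a Finset. -/
noncomputable def bdFinset (m : ℕ) [NeZero m] (P : WPair m) : Finset (ZMod m) :=
  @Finset.filter _ (fun i => Bd m P i) (Classical.decPred _) Finset.univ

lemma intervalCount_eq_card [NeZero m] (P : WPair m) :
    intervalCount m P = (bdFinset m P).card := by
  classical
  rw [intervalCount, ← Set.ncard_coe_finset (bdFinset m P)]
  congr 1
  ext i
  rw [Finset.mem_coe, bdFinset, Finset.mem_filter]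
  simp [Bd]

lemma mem_bdFinset [NeZero m] (P : WPair m) (i : ZMod m) :
    i ∈ bdFinset m P ↔ Bd m P i := by
  classical simp [bdFinset]

/-- The number of boundaries is even. -/
lemma bd_even (hm : 3 ≤ m) (P : WPair m) : Even (intervalCount m P) := by
  haveI : NeZero m := ⟨by omega⟩
  classical
  rw [intervalCount_eq_card]
  set g : ZMod m → ZMod 2 := fun i => if spokeE m i ∈ P.1 then 1 else 0 with hg
  have key : ((bdFinset m P).card : ZMod 2) = ∑ i : ZMod m, (g i + g (i + 1)) := by
    rw [bdFinset, Finset.card_filter]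
    push_cast
    refine Finset.sum_congr rfl (fun i _ => ?_)
    by_cases h1 : spokeE m i ∈ P.1 <;> by_cases h2 : spokeE m (i + 1) ∈ P.1 <;>
      simp [Bd, g, h1, h2] <;> decide
  have shift : ∑ i : ZMod m, g (i + 1) = ∑ i : ZMod m, g i :=
    Fintype.sum_equiv (Equiv.addRight (1 : ZMod m)) _ _ (fun i => rfl)
  rw [Finset.sum_add_distrib, shift, CharTwo.add_self_eq_zero] at key
  obtain ⟨c, hc⟩ := (ZMod.natCast_eq_zero_iff _ 2).mp key
  exact ⟨c, by omega⟩

end Infra2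
section Graph1

open SimpleGraph

variable {m : ℕ}

lemma zmod_cast_inj (hm : 3 ≤ m) {s t : ℕ} (hs : s < m) (ht : t < m)
    (h : (s : ZMod m) = t) : s = t := by
  haveI : NeZero m := ⟨by omega⟩
  have := congrArg ZMod.val h
  rwa [ZMod.val_natCast, ZMod.val_natCast, Nat.mod_eq_of_lt hs, Nat.mod_eq_of_lt ht] at this

lemma adj_spoke {B : Set (Sym2 (Option (ZMod m)))} {i : ZMod m} (h : spokeE m i ∈ B) :
    (SimpleGraph.fromEdgeSet B).Adj none (some i) := by
  rw [SimpleGraph.fromEdgeSet_adj]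
  exact ⟨h, by simp⟩

lemma adj_rim (hm : 3 ≤ m) {B : Set (Sym2 (Option (ZMod m)))} {i : ZMod m}
    (h : rimE m i ∈ B) :
    (SimpleGraph.fromEdgeSet B).Adj (some i) (some (i + 1)) := by
  rw [SimpleGraph.fromEdgeSet_adj]
  exact ⟨h, by simpa using self_ne_add_one hm i⟩

/-- If both spokes at the ends of a rim edge share its color class, that class has a
cycle. -/
lemma no_triangle (hm : 3 ≤ m) {A : Set (Sym2 (Option (ZMod m)))}
    (hac : (SimpleGraph.fromEdgeSet A).IsAcyclic) (i : ZMod m)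
    (h1 : spokeE m i ∈ A) (h2 : spokeE m (i + 1) ∈ A) (h3 : rimE m i ∈ A) : False := by
  have hne : (some i : Option (ZMod m)) ≠ some (i + 1) := by
    simpa using self_ne_add_one hm i
  have h := isAcyclic_iff_path_unique.mp hac
    ⟨Walk.cons (adj_spoke h2) Walk.nil, by rw [Walk.isPath_def]; simp⟩
    ⟨Walk.cons (adj_spoke h1) (Walk.cons (adj_rim hm h3) Walk.nil), by
      rw [Walk.isPath_def]; simp [hne]⟩
  rw [Subtype.mk_eq_mk] at h
  simpa using congrArg Walk.length h

lemma exists_rim_walk (hm : 3 ≤ m) {B : Set (Sym2 (Option (ZMod m)))} (i : ZMod m) :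
    ∀ t : ℕ, (∀ s : ℕ, s < t → rimE m (i + s) ∈ B) →
    ∃ p : (SimpleGraph.fromEdgeSet B).Walk (some (i + t)) (some i),
      p.support = ((List.range (t + 1)).reverse).map (fun s : ℕ => some (i + s))
  | 0, _ => by
    refine ⟨(Walk.nil).copy (by norm_num) rfl, ?_⟩
    rw [List.range_succ]; simp
  | (t + 1), h => by
    obtain ⟨p, hp⟩ := exists_rim_walk hm i t (fun s hs => h s (by omega))
    have e1 : i + ((t + 1 : ℕ) : ZMod m) = (i + t) + 1 := by push_cast; ring
    have adj : (SimpleGraph.fromEdgeSet B).Adj (some (i + ((t+1 : ℕ) : ZMod m)))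
        (some (i + t)) := by
      rw [e1]
      rw [SimpleGraph.fromEdgeSet_adj]
      constructor
      · rw [Sym2.eq_swap]
        exact h t (by omega)
      · simpa using (self_ne_add_one hm (i + t)).symm
    refine ⟨Walk.cons adj p, ?_⟩
    rw [Walk.support_cons, hp]
    simp [List.range_succ]

lemma rim_walk_nodup (hm : 3 ≤ m) (i : ZMod m) {t : ℕ} (ht : t < m) :
    (((List.range (t + 1)).reverse).map
      (fun s : ℕ => (some (i + s) : Option (ZMod m)))).Nodup := by
  refine List.Nodup.map_on ?_ (by simp [List.nodup_reverse, List.nodup_range])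
  intro s1 h1 s2 h2 heq
  simp only [List.mem_reverse, List.mem_range] at h1 h2
  have : (s1 : ZMod m) = s2 := by
    have := Option.some_injective _ heq
    exact add_left_cancel this
  exact zmod_cast_inj hm (by omega) (by omega) this

end Graph1
section Graph2

open SimpleGraph

variable {m : ℕ}

/-- If the interval spokes and both flanking rim edges all lie in `A`, the other class
`B` cannot connect the interval's outer vertices to the center. -/
lemma no_escape (hm : 3 ≤ m) {A B : Set (Sym2 (Option (ZMod m)))}
    (hBsub : B ⊆ (wheelGraph m).edgeSet)
    (hdisj : Disjoint A B) (i : ZMod m) (k : ℕ)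
    (hX : ∀ t : ℕ, t ≤ k → spokeE m (i + 1 + t) ∈ A)
    (hri : rimE m i ∈ A) (hrj : rimE m (i + 1 + k) ∈ A)
    (hconn : (SimpleGraph.fromEdgeSet B).Connected) : False := by
  set S : Set (Option (ZMod m)) := {v | ∃ t : ℕ, t ≤ k ∧ v = some (i + 1 + t)} with hS
  have notB : ∀ e ∈ A, e ∉ B := fun e he => Set.disjoint_left.mp hdisj he
  have closure : ∀ u v : Option (ZMod m),
      (SimpleGraph.fromEdgeSet B).Adj u v → u ∈ S → v ∈ S := by
    intro u v hadj hu
    obtain ⟨t, htk, rfl⟩ := hu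
    rw [SimpleGraph.fromEdgeSet_adj] at hadj
    obtain ⟨hmem, hne⟩ := hadj
    rcases edge_class (hBsub hmem) with ⟨a, ha⟩ | ⟨a, ha⟩
    · have ha' := ha
      rw [spokeE, Sym2.eq_iff] at ha'
      rcases ha' with ⟨h1, -⟩ | ⟨h1, h2⟩
      · exact absurd h1 (by simp)
      · have hae : a = i + 1 + t := Option.some_injective _ h1.symm
        subst hae
        rw [ha] at hmem
        exact absurd hmem (notB _ (hX t htk))
    · have ha' := ha
      rw [rimE, Sym2.eq_iff] at ha'
      rcases ha' with ⟨h1, h2⟩ | ⟨h1, h2⟩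
      · -- u = some a, v = some (a+1)
        have hae : a = i + 1 + t := Option.some_injective _ h1.symm
        subst hae
        rcases Nat.lt_or_ge t k with hlt | hge
        · refine ⟨t + 1, by omega, ?_⟩
          rw [h2]
          congr 1
          push_cast; ring
        · have htk' : t = k := by omega
          subst htk'
          rw [ha] at hmem
          exact absurd hmem (notB _ hrj)
      · -- u = some (a+1), v = some a
        have hae : a + 1 = i + 1 + t := Option.some_injective _ h1.symm
        rcases Nat.eq_zero_or_pos t with h0 | hpos
        · subst h0
          have hai : a = i := by
            have : a + 1 = i + 1 := by simpa using hae
            exact add_right_cancel this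
          subst hai
          rw [ha] at hmem
          exact absurd hmem (notB _ hri)
        · refine ⟨t - 1, by omega, ?_⟩
          have hc : ((t : ℕ) : ZMod m) = ((t - 1 : ℕ) : ZMod m) + 1 := by
            conv_lhs => rw [show t = (t - 1) + 1 by omega]
            push_cast; ring
          rw [hc, ← add_assoc] at hae
          rw [h2, add_right_cancel hae]
  have key : ∀ (u v : Option (ZMod m)) (w : (SimpleGraph.fromEdgeSet B).Walk u v),
      u ∈ S → v ∈ S := by
    intro u v w
    induction w with
    | nil => exact id
    | cons h p ih => intro hu; exact ih (closure _ _ h hu)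
  obtain ⟨w⟩ := hconn.preconnected (some (i + 1)) none
  obtain ⟨t, -, ht⟩ := key _ _ w ⟨0, Nat.zero_le k, by norm_num⟩
  exact absurd ht (by simp)

end Graph2
section Graph3

open SimpleGraph

variable {m : ℕ}

/-- Core exchange lemma: across a monochromatic interval, exactly one of the two
flanking rim edges has the opposite color. -/
lemma exch_core (hm : 3 ≤ m) {A B : Set (Sym2 (Option (ZMod m)))}
    (hA : IsTreeSet m A) (hB : IsTreeSet m B)
    (hdisj : Disjoint A B) (hunion : A ∪ B = (wheelGraph m).edgeSet)
    (i : ZMod m) (k : ℕ) (hkm : k + 2 ≤ m)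
    (hX : ∀ t : ℕ, t ≤ k → spokeE m (i + 1 + t) ∈ A)
    (hi : spokeE m i ∈ B) (hj : spokeE m (i + 1 + k + 1) ∈ B) :
    (rimE m i ∈ B ↔ rimE m (i + 1 + k) ∉ B) := by

  -- interior rim edges are in B
  have interior : ∀ t : ℕ, t < k → rimE m (i + 1 + t) ∈ B := by
    intro t htk
    by_contra hcon
    have hA' : rimE m (i + 1 + t) ∈ A := by
      rcases hunion ▸ rimE_mem_edgeSet hm (i + 1 + t) with h | h
      · exact h
      · exact absurd h hcon
    refine no_triangle hm hA.2.2 (i + 1 + t) (hX t (by omega)) ?_ hA'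
    have e1 : i + 1 + (t : ZMod m) + 1 = i + 1 + ((t + 1 : ℕ) : ZMod m) := by
      push_cast; ring
    rw [e1]
    exact hX (t + 1) (by omega)
  constructor
  · -- at most one: both rim edges in B give a cycle in B
    intro hriB hrjB
    have hrims : ∀ s : ℕ, s < k + 1 → rimE m ((i + 1) + s) ∈ B := by
      intro s hs
      rcases Nat.lt_or_ge s k with h | h
      · exact interior s h
      · have : s = k := by omega
        subst this
        exact hrjB
    obtain ⟨p, hp⟩ := exists_rim_walk hm (i + 1) (k + 1) hrims
    have e2 : (i + 1) + ((k + 1 : ℕ) : ZMod m) = i + 1 + (k : ZMod m) + 1 := by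
      push_cast; ring
    have adjlong : (SimpleGraph.fromEdgeSet B).Adj none (some ((i + 1) + ((k+1 : ℕ) : ZMod m))) := by
      rw [e2]; exact adj_spoke hj
    have hnodup : p.support.Nodup := by
      rw [hp]; exact rim_walk_nodup hm (i + 1) (by omega)
    have hnone : (none : Option (ZMod m)) ∉ p.support := by
      rw [hp]; simp
    have hlongpath : (Walk.cons adjlong p).IsPath := by
      rw [Walk.isPath_def, Walk.support_cons]
      exact List.nodup_cons.mpr ⟨hnone, hnodup⟩
    have hne1 : (some i : Option (ZMod m)) ≠ some (i + 1) := by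
      simpa using self_ne_add_one hm i
    have hshortpath : (Walk.cons (adj_spoke hi) (Walk.cons (adj_rim hm hriB)
        Walk.nil)).IsPath := by
      rw [Walk.isPath_def]; simp [hne1]
    have heq := isAcyclic_iff_path_unique.mp hB.2.2
      ⟨_, hshortpath⟩ ⟨_, hlongpath⟩
    rw [Subtype.mk_eq_mk] at heq
    have hsupp := congrArg Walk.support heq
    rw [Walk.support_cons, Walk.support_cons, Walk.support_cons, Walk.support_nil, hp]
      at hsupp
    -- compare lengths of supports
    have hlen := congrArg List.length hsupp
    rw [List.length_cons, List.length_cons, List.length_cons, List.length_nil,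
      List.length_cons, List.length_map, List.length_reverse, List.length_range] at hlen
    have hk0 : k = 0 := by omega
    subst hk0
    -- now compare the second entries
    rw [List.range_succ, List.range_succ] at hsupp
    simp only [List.range_zero] at hsupp
    have h5 : (some i : Option (ZMod m)) = some ((i + 1) + ((0 + 1 : ℕ) : ZMod m)) := by
      have := congrArg (fun l => l[1]?) hsupp
      simpa using this
    have h6 := Option.some_injective _ h5
    push_cast at h6
    have h7 : (2 : ZMod m) = 0 := by linear_combination -h6
    exact wTwo_ne_zero hm h7
  · -- at least one: both rim edges in A disconnect B
    intro hrjB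
    by_contra hriB
    have hriA : rimE m i ∈ A := by
      rcases hunion ▸ rimE_mem_edgeSet hm i with h | h
      · exact h
      · exact absurd h hriB
    have hrjA : rimE m (i + 1 + k) ∈ A := by
      rcases hunion ▸ rimE_mem_edgeSet hm (i + 1 + k) with h | h
      · exact h
      · exact absurd h hrjB
    exact no_escape hm hB.1 hdisj i k hX hriA hrjA hB.2.1
end Graph3
section Orient

variable {m : ℕ}

lemma sgn_consec (hm : 3 ≤ m) {P : WPair m} (hP : IsWheelColoring m P)
    (i : ZMod m) (k : ℕ) (hkm : k + 2 ≤ m)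
    (hBi : Bd m P i) (hBj : Bd m P (i + 1 + k))
    (hmid : ∀ t : ℕ, t < k → ¬ Bd m P (i + 1 + t)) :
    ((rimE m i ∈ P.1 ↔ spokeE m i ∈ P.1) ↔
     (rimE m (i + 1 + k) ∈ P.1 ↔ spokeE m (i + 1 + k) ∈ P.1)) := by
  have hmem2 := fun e he => coloring_mem2 hP (e := e) he
  have hconst : ∀ t : ℕ, t ≤ k →
      (spokeE m (i + 1) ∈ P.1 ↔ spokeE m (i + 1 + t) ∈ P.1) := by
    intro t ht
    exact spoke_const P (i + 1) t (fun s hs => hmid s (by omega))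
  have hBi' := hBi
  rw [Bd] at hBi'
  have hBj' := hBj
  rw [Bd] at hBj'
  have hjP1 : spokeE m (i + 1 + k) ∈ P.1 ↔ spokeE m (i + 1) ∈ P.1 :=
    (hconst k le_rfl).symm
  by_cases hcase : spokeE m (i + 1) ∈ P.1
  · -- interval in P.1, flanks in P.2
    have hX : ∀ t : ℕ, t ≤ k → spokeE m (i + 1 + t) ∈ P.1 :=
      fun t ht => (hconst t ht).mp hcase
    have hiB : spokeE m i ∈ P.2 :=
      (hmem2 _ (spokeE_mem_edgeSet i)).mpr (fun h => hBi' (iff_of_true h hcase))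
    have hjA : spokeE m (i + 1 + k) ∈ P.1 := hjP1.mpr hcase
    have hj1B : spokeE m (i + 1 + k + 1) ∈ P.2 :=
      (hmem2 _ (spokeE_mem_edgeSet _)).mpr (fun h => hBj' (iff_of_true hjA h))
    have hcore := exch_core hm hP.1 hP.2.1 hP.2.2.1 hP.2.2.2 i k hkm hX hiB hj1B
    have hri : rimE m i ∈ P.2 ↔ rimE m i ∉ P.1 := hmem2 _ (rimE_mem_edgeSet hm i)
    have hrj : rimE m (i + 1 + k) ∈ P.2 ↔ rimE m (i + 1 + k) ∉ P.1 :=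
      hmem2 _ (rimE_mem_edgeSet hm _)
    have hiA : spokeE m i ∉ P.1 := fun h => hBi' (iff_of_true h hcase)
    rw [hri, hrj] at hcore
    constructor
    · intro h
      have h1 : rimE m i ∉ P.1 := fun hr => hiA (h.mp hr)
      exact iff_of_true (not_not.mp (hcore.mp h1)) hjA
    · intro h
      have h1 : rimE m i ∉ P.1 := hcore.mpr (not_not.mpr (h.mpr hjA))
      exact iff_of_false h1 hiA
  · -- interval in P.2, flanks in P.1
    have hX : ∀ t : ℕ, t ≤ k → spokeE m (i + 1 + t) ∈ P.2 := by
      intro t ht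
      refine (hmem2 _ (spokeE_mem_edgeSet _)).mpr (fun h => hcase ((hconst t ht).mpr h))
    have hiA : spokeE m i ∈ P.1 := by
      by_contra h
      exact hBi' (iff_of_false h hcase)
    have hjB : spokeE m (i + 1 + k) ∉ P.1 := fun h => hcase (hjP1.mp h)
    have hj1A : spokeE m (i + 1 + k + 1) ∈ P.1 := by
      by_contra h
      exact hBj' (iff_of_false hjB h)
    have hcore := exch_core hm hP.2.1 hP.1 hP.2.2.1.symm
      (by rw [Set.union_comm]; exact hP.2.2.2) i k hkm hX hiA hj1A
    constructor
    · intro h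
      exact iff_of_false (hcore.mp (h.mpr hiA)) hjB
    · intro h
      exact iff_of_true (hcore.mpr (fun hr => hjB (h.mp hr))) hiA

lemma sgn_global (hm : 3 ≤ m) {P : WPair m} (hP : IsWheelColoring m P) :
    ∀ i j : ZMod m, Bd m P i → Bd m P j →
      ((rimE m i ∈ P.1 ↔ spokeE m i ∈ P.1) ↔
       (rimE m j ∈ P.1 ↔ spokeE m j ∈ P.1)) := by
  haveI : NeZero m := ⟨by omega⟩
  suffices h : ∀ n : ℕ, ∀ i j : ZMod m, (j - i).val = n → Bd m P i → Bd m P j →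
      ((rimE m i ∈ P.1 ↔ spokeE m i ∈ P.1) ↔
       (rimE m j ∈ P.1 ↔ spokeE m j ∈ P.1)) by
    exact fun i j hi hj => h (j - i).val i j rfl hi hj
  intro n
  induction n using Nat.strong_induction_on with
  | _ n ih =>
    intro i j hn hi hj
    rcases Nat.eq_zero_or_pos n with h0 | hpos
    · subst h0
      have : j - i = 0 := by rwa [← ZMod.val_eq_zero]
      have : j = i := by
        have := congrArg (· + i) this
        simpa [sub_add_cancel] using this
      rw [this]
    · -- next boundary exists
      classical
      have hnv : n < m := by rw [← hn]; exact ZMod.val_lt _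
      have hjeq : i + 1 + ((n - 1 : ℕ) : ZMod m) = j := by
        have h1 : ((n : ℕ) : ZMod m) = j - i := by rw [← hn, ZMod.natCast_zmod_val]
        have : ((n - 1 : ℕ) : ZMod m) = ((n : ℕ) : ZMod m) - 1 := by
          conv_rhs => rw [show n = (n - 1) + 1 by omega]
          push_cast; ring
        rw [this, h1]; ring
      have hex : ∃ t : ℕ, Bd m P (i + 1 + t) := ⟨n - 1, by rw [hjeq]; exact hj⟩
      set t₀ := Nat.find hex with ht₀
      have hBt₀ : Bd m P (i + 1 + t₀) := Nat.find_spec hex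
      have hmin : ∀ t : ℕ, t < t₀ → ¬ Bd m P (i + 1 + t) := fun t ht => Nat.find_min hex ht
      have ht₀le : t₀ ≤ n - 1 := Nat.find_min' hex (by rw [hjeq]; exact hj)
      have hsgn1 := sgn_consec hm hP i t₀ (by omega) hi hBt₀ hmin
      rcases Nat.lt_or_ge t₀ (n - 1) with hlt | hge
      · -- chain through i + 1 + t₀
        have hval : (j - (i + 1 + (t₀ : ZMod m))).val = n - 1 - t₀ := by
          have h1 : j - (i + 1 + (t₀ : ZMod m)) = ((n - 1 - t₀ : ℕ) : ZMod m) := by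
            rw [← hjeq]
            have : ((n - 1 : ℕ) : ZMod m) = ((n - 1 - t₀ : ℕ) : ZMod m) + t₀ := by
              conv_lhs => rw [show n - 1 = (n - 1 - t₀) + t₀ by omega]
              push_cast; ring
            rw [this]; ring
          rw [h1, ZMod.val_natCast, Nat.mod_eq_of_lt (by omega)]
        have hrest := ih (n - 1 - t₀) (by omega) (i + 1 + t₀) j hval hBt₀ hj
        exact hsgn1.trans hrest
      · have : t₀ = n - 1 := by omega
        rw [this, hjeq] at hsgn1
        exact hsgn1
      
/-- Every wheel coloring has one of the two orientations. -/
lemma orient_total (hm : 3 ≤ m) {P : WPair m} (hP : IsWheelColoring m P) :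
    PositiveOrientation m P ∨ NegativeOrientation m P := by
  obtain ⟨i₀, hi₀⟩ := exists_bd hm hP
  by_cases hs : rimE m i₀ ∈ P.1 ↔ spokeE m i₀ ∈ P.1
  · left; intro i
    by_cases hb : Bd m P i
    · exact Or.inr ((sgn_global hm hP i i₀ hb hi₀).mpr hs)
    · left; rw [Bd, not_not] at hb; exact hb
  · right; intro i
    by_cases hb : Bd m P i
    · right
      have h1 : ¬(rimE m i ∈ P.1 ↔ spokeE m i ∈ P.1) :=
        fun h => hs ((sgn_global hm hP i₀ i hi₀ hb).mpr h)
      rw [Bd] at hb; tauto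
    · left; rw [Bd, not_not] at hb; exact hb

end Orient
section Step

variable {m : ℕ}

lemma intervalCount_def (P : WPair m) : intervalCount m P = {i | Bd m P i}.ncard := rfl

lemma ncard_triple_le {α : Type*} (p q r : α) : ({p, q, r} : Set α).ncard ≤ 3 := by
  refine le_trans (Set.ncard_insert_le _ _) ?_
  have h2 : ({q, r} : Set α).ncard ≤ 2 := by
    refine le_trans (Set.ncard_insert_le _ _) ?_
    simp [Set.ncard_singleton]
  omega

lemma ncard_quad_distinct {α : Type*} {x y z w : α}
    (h : 4 ≤ ({x, y, z, w} : Set α).ncard) :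
    x ≠ y ∧ x ≠ z ∧ x ≠ w ∧ y ≠ z ∧ y ≠ w ∧ z ≠ w := by
  have hfin : ∀ p q r : α, ({x, y, z, w} : Set α) ⊆ {p, q, r} → False := by
    intro p q r hsub
    have := Set.ncard_le_ncard hsub (by
      exact ((Set.finite_singleton r).insert q).insert p)
    have := ncard_triple_le p q r
    omega
  refine ⟨?_, ?_, ?_, ?_, ?_, ?_⟩ <;> rintro rfl
  · exact hfin x z w (by intro v hv; simp at hv ⊢; tauto)
  · exact hfin x y w (by intro v hv; simp at hv ⊢; tauto)
  · exact hfin x y z (by intro v hv; simp at hv ⊢; tauto)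
  · exact hfin x y w (by intro v hv; simp at hv ⊢; tauto)
  · exact hfin x y z (by intro v hv; simp at hv ⊢; tauto)
  · exact hfin x y z (by intro v hv; simp at hv ⊢; tauto)

/-- In a step from a coloring with at least 4 intervals, some boundary is untouched. -/
lemma exists_untouched (hm : 3 ≤ m) {P Q : WPair m} (hP : IsWheelColoring m P)
    (hstep : WStep m P Q) (h4 : 4 ≤ intervalCount m P) :
    ∃ k, Bd m P k ∧
      (spokeE m k ∈ Q.1 ↔ spokeE m k ∈ P.1) ∧
      (spokeE m (k + 1) ∈ Q.1 ↔ spokeE m (k + 1) ∈ P.1) ∧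
      (rimE m k ∈ Q.1 ↔ rimE m k ∈ P.1) := by
  haveI : NeZero m := ⟨by omega⟩
  obtain ⟨e, f, he, hf, hQ1, hQ2, hQcol⟩ := hstep
  have hpres : ∀ x, x ≠ e → x ≠ f → (x ∈ Q.1 ↔ x ∈ P.1) := by
    intro x hxe hxf
    rw [hQ1]
    simp [Set.mem_insert_iff, Set.mem_diff, hxe, hxf]
  by_contra hno
  have htouch : ∀ k, Bd m P k →
      (spokeE m k = e ∨ spokeE m k = f) ∨ (spokeE m (k+1) = e ∨ spokeE m (k+1) = f) ∨
      (rimE m k = e ∨ rimE m k = f) := by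
    intro k hk
    by_contra hc
    push_neg at hc
    exact hno ⟨k, hk, hpres _ hc.1.1 hc.1.2, hpres _ hc.2.1.1 hc.2.1.2,
      hpres _ hc.2.2.1 hc.2.2.2⟩
  rw [intervalCount_def] at h4
  -- classify e and f
  rcases edge_class (hP.1.1 he) with ⟨a, rfl⟩ | ⟨a, rfl⟩
  rotate_left
  -- e is a rim edge : at most 3 touched indices
  · rcases edge_class (hP.2.1.1 hf) with ⟨b, rfl⟩ | ⟨b, rfl⟩
    · have hsub : {i | Bd m P i} ⊆ {a, b - 1, b} := by
        intro k hk
        rcases htouch k hk with (h | h) | (h | h) | (h | h)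
        · exact absurd h (spokeE_ne_rimE k a)
        · have := spokeE_inj h; right; right; exact this
        · exact absurd h (spokeE_ne_rimE (k+1) a)
        · have := spokeE_inj h
          right; left
          rw [eq_sub_iff_add_eq]; exact this
        · have := rimE_inj hm h; left; exact this
        · exact absurd h.symm (spokeE_ne_rimE b k)
      have hle := Set.ncard_le_ncard hsub (by
        exact ((Set.finite_singleton b).insert (b-1)).insert a)
      have := ncard_triple_le a (b-1) b
      omega
    · have hsub : {i | Bd m P i} ⊆ {a, b, b} := by
        intro k hk
        rcases htouch k hk with (h | h) | (h | h) | (h | h)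
        · exact absurd h (spokeE_ne_rimE k a)
        · exact absurd h (spokeE_ne_rimE k b)
        · exact absurd h (spokeE_ne_rimE (k+1) a)
        · exact absurd h (spokeE_ne_rimE (k+1) b)
        · have := rimE_inj hm h; left; exact this
        · have := rimE_inj hm h; right; left; exact this
      have hle := Set.ncard_le_ncard hsub (by
        exact ((Set.finite_singleton b).insert b).insert a)
      have := ncard_triple_le a b b
      omega
  · rcases edge_class (hP.2.1.1 hf) with ⟨b, rfl⟩ | ⟨b, rfl⟩
    rotate_left
    · -- f rim : at most 3
      have hsub : {i | Bd m P i} ⊆ {a - 1, a, b} := by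
        intro k hk
        rcases htouch k hk with (h | h) | (h | h) | (h | h)
        · have := spokeE_inj h; right; left; exact this
        · exact absurd h (spokeE_ne_rimE k b)
        · have := spokeE_inj h; left; rw [eq_sub_iff_add_eq]; exact this
        · exact absurd h (spokeE_ne_rimE (k+1) b)
        · exact absurd h.symm (spokeE_ne_rimE a k)
        · have := rimE_inj hm h; right; right; exact this
      have hle := Set.ncard_le_ncard hsub (by
        exact ((Set.finite_singleton b).insert a).insert (a-1))
      have := ncard_triple_le (a-1) a b
      omega
    · -- both spokes
      have hsub : {i | Bd m P i} ⊆ {a - 1, a, b - 1, b} := by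
        intro k hk
        rcases htouch k hk with (h | h) | (h | h) | (h | h)
        · have := spokeE_inj h; right; left; exact this
        · have := spokeE_inj h; right; right; right; exact this
        · have := spokeE_inj h; left; rw [eq_sub_iff_add_eq]; exact this
        · have := spokeE_inj h; right; right; left; rw [eq_sub_iff_add_eq]; exact this
        · exact absurd h.symm (spokeE_ne_rimE a k)
        · exact absurd h.symm (spokeE_ne_rimE b k)
      have hSfin : ({a - 1, a, b - 1, b} : Set (ZMod m)).Finite :=
        (((Set.finite_singleton b).insert (b-1)).insert a).insert (a-1)
      have hSle : ({a - 1, a, b - 1, b} : Set (ZMod m)).ncard ≤ 4 := by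
        refine le_trans (Set.ncard_insert_le _ _) ?_
        have := ncard_triple_le a (b-1) b
        omega
      have hEq : {i | Bd m P i} = {a - 1, a, b - 1, b} :=
        Set.eq_of_subset_of_ncard_le hsub (by omega) hSfin
      obtain ⟨hd1, hd2, hd3, hd4, hd5, hd6⟩ := ncard_quad_distinct
        (x := a-1) (y := a) (z := b-1) (w := b) (by rw [← hEq]; omega)
      -- the four indices are boundaries
      have hBa : Bd m P a := by rw [show Bd m P a ↔ a ∈ {i | Bd m P i} from Iff.rfl, hEq]; simp
      have hBa1 : Bd m P (a - 1) := by
        rw [show Bd m P (a-1) ↔ (a-1) ∈ {i | Bd m P i} from Iff.rfl, hEq]; simp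
      have hBb : Bd m P b := by rw [show Bd m P b ↔ b ∈ {i | Bd m P i} from Iff.rfl, hEq]; simp
      have hBb1 : Bd m P (b - 1) := by
        rw [show Bd m P (b-1) ↔ (b-1) ∈ {i | Bd m P i} from Iff.rfl, hEq]; simp
      -- spoke colors
      have hfP1 : spokeE m b ∉ P.1 := fun h => Set.disjoint_left.mp hP.2.2.1 h hf
      have ha1 : spokeE m (a + 1) ∉ P.1 := by
        rw [Bd] at hBa
        intro h; exact hBa (iff_of_true he h)
      have hb1 : spokeE m (b - 1) ∈ P.1 := by
        rw [Bd] at hBb1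
        by_contra h
        rw [sub_add_cancel] at hBb1
        exact hBb1 (iff_of_false h hfP1)
      have hm1 : ((m - 1 : ℕ) : ZMod m) = -1 := by
        push_cast [Nat.cast_sub (by omega : 1 ≤ m)]
        rw [ZMod.natCast_self]; ring
      have hm2 : ((m - 2 : ℕ) : ZMod m) = -2 := by
        push_cast [Nat.cast_sub (by omega : 2 ≤ m)]
        rw [ZMod.natCast_self]; ring
      have hn : (a + 1) + (((b - 1) - (a + 1)).val : ZMod m) = b - 1 := by
        rw [ZMod.natCast_zmod_val]; ring
      set n := ((b - 1) - (a + 1)).val with hndef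
      have hnm : n < m := ZMod.val_lt _
      have hdiff : ¬ (spokeE m (a + 1) ∈ P.1 ↔ spokeE m ((a + 1) + (n : ZMod m)) ∈ P.1) := by
        rw [hn]
        exact fun h => ha1 (h.mpr hb1)
      obtain ⟨s, hsn, hBs⟩ := exists_bd_between P (a + 1) n hdiff
      have hsmem : (a + 1) + (s : ZMod m) ∈ ({a - 1, a, b - 1, b} : Set (ZMod m)) := by
        rw [← hEq]; exact hBs
      rcases hsmem with h | h | h | h
      · -- a + 1 + s = a - 1 : s ≡ m - 2, so n = m - 1 and b - 1 = a
        have hs2 : (s : ZMod m) = ((m - 2 : ℕ) : ZMod m) := by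
          rw [hm2]; linear_combination h
        have hs2' : s = m - 2 := zmod_cast_inj hm (by omega) (by omega) hs2
        have hnval : n = m - 1 := by omega
        apply hd4
        rw [hnval, hm1] at hn
        linear_combination hn
      · -- a + 1 + s = a : s ≡ m - 1, impossible
        have hs1 : (s : ZMod m) = ((m - 1 : ℕ) : ZMod m) := by
          rw [hm1]; linear_combination h
        have := zmod_cast_inj hm (by omega) (by omega) hs1
        omega
      · -- a + 1 + s = b - 1 : s = n, impossible
        have h' : (s : ZMod m) = (n : ZMod m) := by
          rw [← hn] at h
          exact add_left_cancel h
        have := zmod_cast_inj hm (by omega) (by omega) h'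
        omega
      · -- a + 1 + s = b
        simp only [Set.mem_singleton_iff] at h
        rcases Nat.lt_or_ge (n + 1) m with hlt | hge
        · have h' : (s : ZMod m) = ((n + 1 : ℕ) : ZMod m) := by
            push_cast
            have hb : (b : ZMod m) = (b - 1) + 1 := by ring
            rw [hb, ← hn] at h
            linear_combination h
          have := zmod_cast_inj hm (by omega) hlt h'
          omega
        · have hnm1 : n + 1 = m := by omega
          have hnn : (n : ZMod m) = -1 := by
            have : ((n : ℕ) : ZMod m) = ((m - 1 : ℕ) : ZMod m) := by
              congr 1; omega
            rw [this, hm1]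
          have hs0 : (s : ZMod m) = 0 := by
            have hb : (b : ZMod m) = (b - 1) + 1 := by ring
            rw [hb, ← hn, hnn] at h
            linear_combination h
          have hs0' : s = 0 := by
            have h0 : (s : ZMod m) = ((0 : ℕ) : ZMod m) := by rw [hs0]; norm_num
            exact zmod_cast_inj hm (by omega) (by omega) h0
          apply hd4
          rw [hs0'] at h
          push_cast at h
          linear_combination h

end Step
section Final1

variable {m : ℕ}

lemma pos_neg_incompatible (hm : 3 ≤ m) {P : WPair m} (hP : IsWheelColoring m P)
    (h1 : PositiveOrientation m P) (h2 : NegativeOrientation m P) : False := by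
  obtain ⟨i, hi⟩ := exists_bd hm hP
  rw [Bd] at hi
  rcases h1 i with h | h
  · exact hi h
  rcases h2 i with h' | h'
  · exact hi h'
  exact hi (h.symm.trans h')

lemma orient_pos_of_bd_sgn (hm : 3 ≤ m) {Q : WPair m} (hQ : IsWheelColoring m Q)
    {k : ZMod m} (hbd : Bd m Q k)
    (hsgn : rimE m k ∈ Q.1 ↔ spokeE m k ∈ Q.1) : PositiveOrientation m Q := by
  rcases orient_total hm hQ with h | h
  · exact h
  · exfalso
    rcases h k with h' | h'
    · exact hbd h'
    · exact hbd (hsgn.symm.trans h')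

lemma orient_neg_of_bd_sgn (hm : 3 ≤ m) {Q : WPair m} (hQ : IsWheelColoring m Q)
    {k : ZMod m} (hbd : Bd m Q k)
    (hsgn : rimE m k ∈ Q.1 ↔ spokeE m (k + 1) ∈ Q.1) : NegativeOrientation m Q := by
  rcases orient_total hm hQ with h | h
  · exfalso
    rcases h k with h' | h'
    · exact hbd h'
    · exact hbd (h'.symm.trans hsgn)
  · exact h

lemma count_ge4 (hm : 3 ≤ m) {P : WPair m} (hP : IsWheelColoring m P)
    (h2 : intervalCount m P ≠ 2) : 4 ≤ intervalCount m P := by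
  haveI : NeZero m := ⟨by omega⟩
  obtain ⟨i, hi⟩ := exists_bd hm hP
  have hpos : 0 < intervalCount m P := by
    rw [intervalCount_def]
    exact (Set.ncard_pos (Set.toFinite _)).mpr ⟨i, hi⟩
  obtain ⟨c, hc⟩ := bd_even hm P
  omega

lemma step_preserve_pos (hm : 3 ≤ m) {P Q : WPair m} (hP : IsWheelColoring m P)
    (hpos : PositiveOrientation m P) (hc : intervalCount m P ≠ 2)
    (hstep : WStep m P Q) : IsWheelColoring m Q ∧ PositiveOrientation m Q := by
  have hQ : IsWheelColoring m Q := by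
    obtain ⟨e, f, -, -, -, -, h⟩ := hstep; exact h
  refine ⟨hQ, ?_⟩
  obtain ⟨k, hk, hsk, hsk1, hrk⟩ := exists_untouched hm hP hstep (count_ge4 hm hP hc)
  have hsgn : rimE m k ∈ P.1 ↔ spokeE m k ∈ P.1 := by
    rcases hpos k with h' | h'
    · exact absurd h' hk
    · exact h'
  have hbdQ : Bd m Q k := by
    rw [Bd, hsk, hsk1]; exact hk
  exact orient_pos_of_bd_sgn hm hQ hbdQ (hrk.trans (hsgn.trans hsk.symm))

lemma step_preserve_neg (hm : 3 ≤ m) {P Q : WPair m} (hP : IsWheelColoring m P)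
    (hneg : NegativeOrientation m P) (hc : intervalCount m P ≠ 2)
    (hstep : WStep m P Q) : IsWheelColoring m Q ∧ NegativeOrientation m Q := by
  have hQ : IsWheelColoring m Q := by
    obtain ⟨e, f, -, -, -, -, h⟩ := hstep; exact h
  refine ⟨hQ, ?_⟩
  obtain ⟨k, hk, hsk, hsk1, hrk⟩ := exists_untouched hm hP hstep (count_ge4 hm hP hc)
  have hsgn : rimE m k ∈ P.1 ↔ spokeE m (k + 1) ∈ P.1 := by
    rcases hneg k with h' | h'
    · exact absurd h' hk
    · exact h'
  have hbdQ : Bd m Q k := by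
    rw [Bd, hsk, hsk1]; exact hk
  exact orient_neg_of_bd_sgn hm hQ hbdQ (hrk.trans (hsgn.trans hsk1.symm))

lemma chain_pos (hm : 3 ≤ m) :
    ∀ (t : List (WPair m)) (P R : WPair m), List.Chain (WStep m) P t →
      IsWheelColoring m P → PositiveOrientation m P →
      (∀ Q ∈ P :: t, intervalCount m Q ≠ 2) →
      (P :: t).getLast? = some R → IsWheelColoring m R ∧ PositiveOrientation m R
  | [], P, R, _, hP, hpos, _, hlast => by
      simp only [List.getLast?_singleton, Option.some_inj] at hlast
      subst hlast; exact ⟨hP, hpos⟩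
  | (Q :: t'), P, R, hchain, hP, hpos, hcnt, hlast => by
      obtain ⟨hstep, hchain'⟩ := List.chain_cons.mp hchain
      obtain ⟨hQ, hQpos⟩ := step_preserve_pos hm hP hpos (hcnt P (by simp)) hstep
      refine chain_pos hm t' Q R hchain' hQ hQpos
        (fun S hS => hcnt S (List.mem_cons_of_mem _ hS)) ?_
      rw [List.getLast?_cons_cons] at hlast
      exact hlast

lemma chain_neg (hm : 3 ≤ m) :
    ∀ (t : List (WPair m)) (P R : WPair m), List.Chain (WStep m) P t →
      IsWheelColoring m P → NegativeOrientation m P →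
      (∀ Q ∈ P :: t, intervalCount m Q ≠ 2) →
      (P :: t).getLast? = some R → IsWheelColoring m R ∧ NegativeOrientation m R
  | [], P, R, _, hP, hneg, _, hlast => by
      simp only [List.getLast?_singleton, Option.some_inj] at hlast
      subst hlast; exact ⟨hP, hneg⟩
  | (Q :: t'), P, R, hchain, hP, hneg, hcnt, hlast => by
      obtain ⟨hstep, hchain'⟩ := List.chain_cons.mp hchain
      obtain ⟨hQ, hQneg⟩ := step_preserve_neg hm hP hneg (hcnt P (by simp)) hstep
      refine chain_neg hm t' Q R hchain' hQ hQneg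
        (fun S hS => hcnt S (List.mem_cons_of_mem _ hS)) ?_
      rw [List.getLast?_cons_cons] at hlast
      exact hlast

/-- Part 3 of the theorem. -/
lemma part3 (hm : 3 ≤ m) (P₁ P₂ : WPair m) (h1 : IsWheelColoring m P₁)
    (h2 : IsWheelColoring m P₂) (hdiff : DifferentOrientation m P₁ P₂)
    (l : List (WPair m)) (hchain : l.Chain' (WStep m)) (hhead : l.head? = some P₁)
    (hlast : l.getLast? = some P₂) : ∃ Q ∈ l, intervalCount m Q = 2 := by
  by_contra hno
  push_neg at hno
  cases l with
  | nil => simp at hhead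
  | cons P t =>
    have hPP : P = P₁ := by simpa using hhead
    subst hPP
    have hchain' : List.Chain (WStep m) P t := hchain
    rcases hdiff with ⟨hp1, hn2⟩ | ⟨hn1, hp2⟩
    · obtain ⟨hcol, hpos⟩ := chain_pos hm t P P₂ hchain' h1 hp1 hno hlast
      exact pos_neg_incompatible hm hcol hpos hn2
    · obtain ⟨hcol, hneg⟩ := chain_neg hm t P P₂ hchain' h1 hn1 hno hlast
      exact pos_neg_incompatible hm hcol hp2 hneg

end Final1
section Final2

variable {m : ℕ}

lemma cast_m_sub_one (hm : 3 ≤ m) : ((m - 1 : ℕ) : ZMod m) = -1 := by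
  push_cast [Nat.cast_sub (by omega : 1 ≤ m)]
  rw [ZMod.natCast_self]; ring

lemma cast_m_sub_two (hm : 3 ≤ m) : ((m - 2 : ℕ) : ZMod m) = -2 := by
  push_cast [Nat.cast_sub (by omega : 2 ≤ m)]
  rw [ZMod.natCast_self]; ring

/-- If all boundaries of a coloring lie in `{i-1, i}`, then both are boundaries and
every spoke other than `i` has the color of spoke `i+1`. -/
lemma two_interval_structure (hm : 3 ≤ m) {P : WPair m} (hP : IsWheelColoring m P)
    (i : ZMod m) (hsub : {k | Bd m P k} ⊆ {i - 1, i}) :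
    Bd m P i ∧ Bd m P (i - 1) ∧
      (∀ k : ZMod m, k ≠ i → (spokeE m k ∈ P.1 ↔ spokeE m (i + 1) ∈ P.1)) := by
  haveI : NeZero m := ⟨by omega⟩
  obtain ⟨j, hj⟩ := exists_bd hm hP
  have hpos0 : 0 < {k | Bd m P k}.ncard := (Set.ncard_pos (Set.toFinite _)).mpr ⟨j, hj⟩
  obtain ⟨c, hc⟩ := bd_even hm P
  rw [intervalCount_def] at hc
  have hple : ({i - 1, i} : Set (ZMod m)).ncard ≤ 2 := by
    refine le_trans (Set.ncard_insert_le _ _) ?_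
    simp [Set.ncard_singleton]
  have hEq : {k | Bd m P k} = {i - 1, i} :=
    Set.eq_of_subset_of_ncard_le hsub (by omega) (Set.toFinite _)
  have hBdi : Bd m P i := by
    rw [show Bd m P i ↔ i ∈ {k | Bd m P k} from Iff.rfl, hEq]; simp
  have hBdi1 : Bd m P (i - 1) := by
    rw [show Bd m P (i - 1) ↔ (i - 1) ∈ {k | Bd m P k} from Iff.rfl, hEq]; simp
  refine ⟨hBdi, hBdi1, ?_⟩
  intro k hki
  by_contra hcon
  have hK : (i + 1) + (((k - (i + 1)).val : ℕ) : ZMod m) = k := by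
    rw [ZMod.natCast_zmod_val]; ring
  set t := (k - (i + 1)).val with ht
  have htm : t < m := ZMod.val_lt _
  have htne : t ≠ m - 1 := by
    intro h
    apply hki
    have hcast : ((t : ℕ) : ZMod m) = -1 := by rw [h]; exact cast_m_sub_one hm
    rw [← hK, hcast]; ring
  have hd : ¬ (spokeE m (i + 1) ∈ P.1 ↔ spokeE m ((i + 1) + (t : ZMod m)) ∈ P.1) := by
    rw [hK]
    exact fun h => hcon h.symm
  obtain ⟨s, hst, hBs⟩ := exists_bd_between P (i + 1) t hd
  have hmem : (i + 1) + (s : ZMod m) ∈ ({i - 1, i} : Set (ZMod m)) := by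
    rw [← hEq]; exact hBs
  rcases hmem with h | h
  · have hs : (s : ZMod m) = ((m - 2 : ℕ) : ZMod m) := by
      rw [cast_m_sub_two hm]; linear_combination h
    have := zmod_cast_inj hm (by omega) (by omega) hs
    omega
  · simp only [Set.mem_singleton_iff] at h
    have hs : (s : ZMod m) = ((m - 1 : ℕ) : ZMod m) := by
      rw [cast_m_sub_one hm]; linear_combination h
    have := zmod_cast_inj hm (by omega) (by omega) hs
    omega

/-- Part 1 of the theorem. -/
lemma part1 (hm : 3 ≤ m) (P : WPair m) (i : ZMod m) (hP : IsWheelColoring m P)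
    (hpos : PositiveOrientation m P)
    (hP' : IsWheelColoring m
      (P.1 ∆ {spokeE m i, rimE m (i - 1)}, P.2 ∆ {spokeE m i, rimE m (i - 1)})) :
    PositiveOrientation m
      (P.1 ∆ {spokeE m i, rimE m (i - 1)}, P.2 ∆ {spokeE m i, rimE m (i - 1)}) := by
  set S : Set (Sym2 (Option (ZMod m))) := {spokeE m i, rimE m (i - 1)} with hS
  have hmemS : ∀ x ∉ S, ∀ A : Set (Sym2 (Option (ZMod m))), (x ∈ A ∆ S ↔ x ∈ A) := by
    intro x hx A
    simp [Set.mem_symmDiff, hx]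
  by_cases hex : ∃ k, Bd m P k ∧ k ≠ i - 1 ∧ k ≠ i
  · obtain ⟨k, hk, hk1, hk2⟩ := hex
    have e1 : spokeE m k ∉ S := by
      simp only [hS, Set.mem_insert_iff, Set.mem_singleton_iff]
      push_neg
      exact ⟨fun h => hk2 (spokeE_inj h), spokeE_ne_rimE _ _⟩
    have e2 : spokeE m (k + 1) ∉ S := by
      simp only [hS, Set.mem_insert_iff, Set.mem_singleton_iff]
      push_neg
      refine ⟨fun h => hk1 ?_, spokeE_ne_rimE _ _⟩
      rw [eq_sub_iff_add_eq]; exact spokeE_inj h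
    have e3 : rimE m k ∉ S := by
      simp only [hS, Set.mem_insert_iff, Set.mem_singleton_iff]
      push_neg
      exact ⟨fun h => spokeE_ne_rimE i k h.symm, fun h => hk1 (rimE_inj hm h)⟩
    have h1 := hmemS _ e1 P.1
    have h2 := hmemS _ e2 P.1
    have h3 := hmemS _ e3 P.1
    have hsgn : rimE m k ∈ P.1 ↔ spokeE m k ∈ P.1 := by
      rcases hpos k with h' | h'
      · exact absurd h' hk
      · exact h'
    have hbd' : Bd m (P.1 ∆ S, P.2 ∆ S) k := fun hiff =>
      hk ((h1.symm.trans hiff).trans h2)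
    exact orient_pos_of_bd_sgn hm hP' hbd' (h3.trans (hsgn.trans h1.symm))
  · exfalso
    push_neg at hex
    have hsub : {k | Bd m P k} ⊆ {i - 1, i} := by
      intro k hk
      by_cases h : k = i - 1
      · exact Or.inl h
      · exact Or.inr (hex k hk h)
    obtain ⟨hBdi, hBdi1, claim⟩ := two_interval_structure hm hP i hsub
    have hii : i - 1 ≠ i := by
      intro h
      apply wOne_ne_zero hm
      linear_combination -h
    have hsgn1 : rimE m (i - 1) ∈ P.1 ↔ spokeE m (i - 1) ∈ P.1 := by
      rcases hpos (i - 1) with h' | h'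
      · exact absurd h' hBdi1
      · exact h'
    by_cases hcase : spokeE m i ∈ P.1
    · have hip1 : spokeE m (i + 1) ∉ P.1 := by
        rw [Bd] at hBdi
        exact fun h => hBdi (iff_of_true hcase h)
      have hallno : ∀ k, k ≠ i → spokeE m k ∉ P.1 :=
        fun k hk h => hip1 ((claim k hk).mp h)
      obtain ⟨a, ha⟩ := exists_spoke hP'.1
      have ha' : spokeE m a ∈ P.1 ∆ S := ha
      by_cases hai : a = i
      · subst hai
        simp [Set.mem_symmDiff, hS, hcase] at ha'
      · have hnS : spokeE m a ∉ S := by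
          simp only [hS, Set.mem_insert_iff, Set.mem_singleton_iff]
          push_neg
          exact ⟨fun h => hai (spokeE_inj h), spokeE_ne_rimE _ _⟩
        rw [hmemS _ hnS] at ha'
        exact hallno a hai ha'
    · have hi2 : spokeE m i ∈ P.2 := (coloring_mem2 hP (spokeE_mem_edgeSet i)).mpr hcase
      have hip1 : spokeE m (i + 1) ∈ P.1 := by
        rw [Bd] at hBdi
        by_contra h
        exact hBdi (iff_of_false hcase h)
      have hallyes : ∀ k, k ≠ i → spokeE m k ∈ P.1 := fun k hk => (claim k hk).mpr hip1
      obtain ⟨a, ha⟩ := exists_spoke hP'.2.1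
      have ha' : spokeE m a ∈ P.2 ∆ S := ha
      by_cases hai : a = i
      · subst hai
        simp [Set.mem_symmDiff, hS, hi2] at ha'
      · have hnS : spokeE m a ∉ S := by
          simp only [hS, Set.mem_insert_iff, Set.mem_singleton_iff]
          push_neg
          exact ⟨fun h => hai (spokeE_inj h), spokeE_ne_rimE _ _⟩
        rw [hmemS _ hnS] at ha'
        exact Set.disjoint_left.mp hP.2.2.1 (hallyes a hai) ha'

/-- Part 2 of the theorem. -/
lemma part2 (hm : 3 ≤ m) (P : WPair m) (i : ZMod m) (hP : IsWheelColoring m P)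
    (hneg : NegativeOrientation m P)
    (hP' : IsWheelColoring m
      (P.1 ∆ {spokeE m i, rimE m i}, P.2 ∆ {spokeE m i, rimE m i})) :
    NegativeOrientation m
      (P.1 ∆ {spokeE m i, rimE m i}, P.2 ∆ {spokeE m i, rimE m i}) := by
  set S : Set (Sym2 (Option (ZMod m))) := {spokeE m i, rimE m i} with hS
  have hmemS : ∀ x ∉ S, ∀ A : Set (Sym2 (Option (ZMod m))), (x ∈ A ∆ S ↔ x ∈ A) := by
    intro x hx A
    simp [Set.mem_symmDiff, hx]
  by_cases hex : ∃ k, Bd m P k ∧ k ≠ i - 1 ∧ k ≠ i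
  · obtain ⟨k, hk, hk1, hk2⟩ := hex
    have e1 : spokeE m k ∉ S := by
      simp only [hS, Set.mem_insert_iff, Set.mem_singleton_iff]
      push_neg
      exact ⟨fun h => hk2 (spokeE_inj h), spokeE_ne_rimE _ _⟩
    have e2 : spokeE m (k + 1) ∉ S := by
      simp only [hS, Set.mem_insert_iff, Set.mem_singleton_iff]
      push_neg
      refine ⟨fun h => hk1 ?_, spokeE_ne_rimE _ _⟩
      rw [eq_sub_iff_add_eq]; exact spokeE_inj h
    have e3 : rimE m k ∉ S := by
      simp only [hS, Set.mem_insert_iff, Set.mem_singleton_iff]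
      push_neg
      exact ⟨fun h => spokeE_ne_rimE i k h.symm, fun h => hk2 (rimE_inj hm h)⟩
    have h1 := hmemS _ e1 P.1
    have h2 := hmemS _ e2 P.1
    have h3 := hmemS _ e3 P.1
    have hsgn : rimE m k ∈ P.1 ↔ spokeE m (k + 1) ∈ P.1 := by
      rcases hneg k with h' | h'
      · exact absurd h' hk
      · exact h'
    have hbd' : Bd m (P.1 ∆ S, P.2 ∆ S) k := fun hiff =>
      hk ((h1.symm.trans hiff).trans h2)
    exact orient_neg_of_bd_sgn hm hP' hbd' (h3.trans (hsgn.trans h2.symm))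
  · exfalso
    push_neg at hex
    have hsub : {k | Bd m P k} ⊆ {i - 1, i} := by
      intro k hk
      by_cases h : k = i - 1
      · exact Or.inl h
      · exact Or.inr (hex k hk h)
    obtain ⟨hBdi, hBdi1, claim⟩ := two_interval_structure hm hP i hsub
    have hsgn1 : rimE m i ∈ P.1 ↔ spokeE m (i + 1) ∈ P.1 := by
      rcases hneg i with h' | h'
      · exact absurd h' hBdi
      · exact h'
    by_cases hcase : spokeE m i ∈ P.1
    · have hip1 : spokeE m (i + 1) ∉ P.1 := by
        rw [Bd] at hBdi
        exact fun h => hBdi (iff_of_true hcase h)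
      have hallno : ∀ k, k ≠ i → spokeE m k ∉ P.1 :=
        fun k hk h => hip1 ((claim k hk).mp h)
      obtain ⟨a, ha⟩ := exists_spoke hP'.1
      have ha' : spokeE m a ∈ P.1 ∆ S := ha
      by_cases hai : a = i
      · subst hai
        simp [Set.mem_symmDiff, hS, hcase] at ha'
      · have hnS : spokeE m a ∉ S := by
          simp only [hS, Set.mem_insert_iff, Set.mem_singleton_iff]
          push_neg
          exact ⟨fun h => hai (spokeE_inj h), spokeE_ne_rimE _ _⟩
        rw [hmemS _ hnS] at ha'
        exact hallno a hai ha'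
    · have hi2 : spokeE m i ∈ P.2 := (coloring_mem2 hP (spokeE_mem_edgeSet i)).mpr hcase
      have hip1 : spokeE m (i + 1) ∈ P.1 := by
        rw [Bd] at hBdi
        by_contra h
        exact hBdi (iff_of_false hcase h)
      have hallyes : ∀ k, k ≠ i → spokeE m k ∈ P.1 := fun k hk => (claim k hk).mpr hip1
      obtain ⟨a, ha⟩ := exists_spoke hP'.2.1
      have ha' : spokeE m a ∈ P.2 ∆ S := ha
      by_cases hai : a = i
      · subst hai
        simp [Set.mem_symmDiff, hS, hi2] at ha'
      · have hnS : spokeE m a ∉ S := by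
          simp only [hS, Set.mem_insert_iff, Set.mem_singleton_iff]
          push_neg
          exact ⟨fun h => hai (spokeE_inj h), spokeE_ne_rimE _ _⟩
        rw [hmemS _ hnS] at ha'
        exact Set.disjoint_left.mp hP.2.2.1 (hallyes a hai) ha'

end Final2

/-- Exchanging a spoke `e` with its rim edge `φ₋ e` does not reverse the orientation of a
wheel coloring (stated for both orientations: for a positive coloring `φ₋ (spoke i)` is
`rim (i-1)`, for a negative one it is `rim i`); consequently, if colorings `P₁` and `P₂`
have different orientations, any sequence of feasible symmetric exchanges transforming
`P₁` into `P₂` must pass through a coloring with exactly two intervals. -/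
theorem stmt10 (m : ℕ) (hm : 3 ≤ m) :
    (∀ (P : Set (Sym2 (Option (ZMod m))) × Set (Sym2 (Option (ZMod m)))) (i : ZMod m),
      IsWheelColoring m P → PositiveOrientation m P →
      IsWheelColoring m
        (P.1 ∆ {spokeE m i, rimE m (i - 1)}, P.2 ∆ {spokeE m i, rimE m (i - 1)}) →
      PositiveOrientation m
        (P.1 ∆ {spokeE m i, rimE m (i - 1)}, P.2 ∆ {spokeE m i, rimE m (i - 1)})) ∧
    (∀ (P : Set (Sym2 (Option (ZMod m))) × Set (Sym2 (Option (ZMod m)))) (i : ZMod m),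
      IsWheelColoring m P → NegativeOrientation m P →
      IsWheelColoring m (P.1 ∆ {spokeE m i, rimE m i}, P.2 ∆ {spokeE m i, rimE m i}) →
      NegativeOrientation m
        (P.1 ∆ {spokeE m i, rimE m i}, P.2 ∆ {spokeE m i, rimE m i})) ∧
    (∀ (P₁ P₂ : Set (Sym2 (Option (ZMod m))) × Set (Sym2 (Option (ZMod m)))),
      IsWheelColoring m P₁ → IsWheelColoring m P₂ → DifferentOrientation m P₁ P₂ →
      ∀ l : List (Set (Sym2 (Option (ZMod m))) × Set (Sym2 (Option (ZMod m)))),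
        l.Chain' (WStep m) → l.head? = some P₁ → l.getLast? = some P₂ →
        ∃ Q ∈ l, intervalCount m Q = 2) := by
  exact ⟨fun P i hP hpos hP' => part1 hm P i hP hpos hP',
    fun P i hP hneg hP' => part2 hm P i hP hneg hP',
    fun P₁ P₂ h1 h2 hd l hc hh hl => part3 hm P₁ P₂ h1 h2 hd l hc hh hl⟩
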